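/- arXiv:2008.10150 — 5 statements merged into one kernel-verified Lean document; each statement's English description precedes it below -/
import Mathlib

section
/- Suppose X ⟂ Z | H with densities. For every m ≥ 1 there exist functions η: X → R^m and ψ: Z → R^m such that E[(η(X)ᵀψ(Z̃) - g*(X,Z̃))^2] ≤ (1/m)·Var(p_{X|H}(X|H̄) p_{Z|H}(Z̃|H̄) / (p_X(X) p_Z(Z̃))), where (X, Z̃, H̄) ∼ p_X ⊗ p_Z ⊗ p_H are mutually independent and g*(x,z) = p_{X,Z}(x,z)/(p_X(x)p_Z(z)). -/
open MeasureTheory ProbabilityTheory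

open Finset in
private lemma pi_sum_sq {𝓗 : Type*} [MeasurableSpace 𝓗] (ρ : Measure 𝓗)
    [IsProbabilityMeasure ρ] (m : ℕ) (d : 𝓗 → ℝ)
    (hd : MemLp d 2 ρ) (hd0 : ∫ h, d h ∂ρ = 0) :
    Integrable (fun v : Fin m → 𝓗 => (∑ i, d (v i)) ^ 2) (Measure.pi fun _ => ρ) ∧
      ∫ v : Fin m → 𝓗, (∑ i, d (v i)) ^ 2 ∂(Measure.pi fun _ => ρ)
        = m * ∫ h, d h ^ 2 ∂ρ := by
  classical
  letI : MeasureSpace 𝓗 := ⟨ρ⟩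
  haveI : IsProbabilityMeasure (volume : Measure 𝓗) := ‹IsProbabilityMeasure ρ›
  have hvol : (Measure.pi fun _ : Fin m => ρ) = (volume : Measure (Fin m → 𝓗)) := by
    rw [MeasureTheory.volume_pi]
    rfl
  set φ : Fin m → Fin m → Fin m → 𝓗 → ℝ :=
    fun i j k h => (if k = i then d h else 1) * (if k = j then d h else 1) with hφ
  have key1 : ∀ i j (v : Fin m → 𝓗), d (v i) * d (v j) = ∏ k, φ i j k (v k) := by
    intro i j v
    simp only [hφ]
    rw [Finset.prod_mul_distrib, Fintype.prod_ite_eq', Fintype.prod_ite_eq']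
  have hφint : ∀ i j k, Integrable (φ i j k) ρ := by
    intro i j k
    by_cases hik : k = i <;> by_cases hjk : k = j
    · simp only [hφ, if_pos hik, if_pos hjk]
      simpa [pow_two] using hd.integrable_sq
    · simp only [hφ, if_pos hik, if_neg hjk, mul_one]
      exact hd.integrable one_le_two
    · simp only [hφ, if_neg hik, if_pos hjk, one_mul]
      exact hd.integrable one_le_two
    · simp only [hφ, if_neg hik, if_neg hjk, mul_one]
      exact integrable_const (1 : ℝ)
  have keyInt : ∀ i j, Integrable (fun v : Fin m → 𝓗 => d (v i) * d (v j))
      (Measure.pi fun _ => ρ) := by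
    intro i j
    rw [hvol]
    simp_rw [key1 i j]
    exact Integrable.fintype_prod (f := φ i j) fun k => hφint i j k
  have keyVal : ∀ i j, (∫ v : Fin m → 𝓗, d (v i) * d (v j) ∂(Measure.pi fun _ => ρ))
      = if i = j then ∫ h, d h ^ 2 ∂ρ else 0 := by
    intro i j
    rw [hvol]
    simp_rw [key1 i j]
    rw [MeasureTheory.integral_fintype_prod_volume_eq_prod (φ i j)]
    by_cases hij : i = j
    · subst hij
      rw [if_pos rfl]
      have hval : ∀ k, (∫ h, φ i i k h) = if k = i then ∫ h, d h ^ 2 ∂ρ else 1 := by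
        intro k
        by_cases hk : k = i
        · rw [if_pos hk]
          simp only [hφ, if_pos hk]
          show (∫ h, d h * d h ∂ρ) = _
          simp_rw [← pow_two]
        · rw [if_neg hk]
          simp only [hφ, if_neg hk, mul_one]
          show (∫ _, (1:ℝ) ∂ρ) = 1
          simp
      rw [Finset.prod_congr rfl fun k _ => hval k]
      simp
    · rw [if_neg hij]
      apply Finset.prod_eq_zero (Finset.mem_univ i)
      have hφd : φ i j i = d := by
        funext h
        simp [hφ, hij]
      rw [hφd]
      exact hd0
  have expand : (fun v : Fin m → 𝓗 => (∑ i, d (v i)) ^ 2)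
      = fun v => ∑ i, ∑ j, d (v i) * d (v j) := by
    funext v
    rw [sq, Finset.sum_mul_sum]
  constructor
  · rw [expand]
    exact integrable_finset_sum _ fun i _ => integrable_finset_sum _ fun j _ => keyInt i j
  · rw [expand]
    rw [integral_finset_sum _ fun i _ => integrable_finset_sum _ fun j _ => keyInt i j]
    rw [Finset.sum_congr rfl fun i _ => integral_finset_sum _ fun j _ => keyInt i j]
    simp_rw [keyVal]
    simp [Finset.sum_ite_eq, Finset.card_univ]

/-- Probabilistic construction (Lemma 4): if `X ⟂ Z | H`, so that the density ratio
`g*(x,z)` equals the `p_H`-average of `p_{X|H}(x|h) p_{Z|H}(z|h)/(p_X(x)p_Z(z))`, then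
for every `m ≥ 1` there exist `η : 𝓧 → ℝ^m`, `ψ : 𝓩 → ℝ^m` with
`E[(η(X)ᵀψ(Z̃) - g*(X,Z̃))²] ≤ (1/m)·Var(p_{X|H}(X|H̄)p_{Z|H}(Z̃|H̄)/(p_X(X)p_Z(Z̃)))`
where `(X, Z̃, H̄) ∼ p_X ⊗ p_Z ⊗ p_H` are mutually independent. -/
theorem stmt6 {𝓧 𝓩 𝓗 : Type*} [MeasurableSpace 𝓧] [MeasurableSpace 𝓩] [MeasurableSpace 𝓗]
    (μX : Measure 𝓧) (νZ : Measure 𝓩) (ρ : Measure 𝓗)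
    [IsProbabilityMeasure μX] [IsProbabilityMeasure νZ] [IsProbabilityMeasure ρ]
    (pX : 𝓧 → ℝ) (pZ : 𝓩 → ℝ) (pXH : 𝓗 → 𝓧 → ℝ) (pZH : 𝓗 → 𝓩 → ℝ)
    (hmeas : Measurable fun q : 𝓧 × 𝓩 × 𝓗 =>
      pXH q.2.2 q.1 * pZH q.2.2 q.2.1 / (pX q.1 * pZ q.2.1))
    (g : 𝓧 → 𝓩 → ℝ)
    (hg : ∀ x z, g x z = ∫ h, pXH h x * pZH h z / (pX x * pZ z) ∂ρ)
    (hL2 : MemLp (fun q : 𝓧 × 𝓩 × 𝓗 =>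
      pXH q.2.2 q.1 * pZH q.2.2 q.2.1 / (pX q.1 * pZ q.2.1)) 2 (μX.prod (νZ.prod ρ)))
    (m : ℕ) (hm : 1 ≤ m) :
    ∃ (η : 𝓧 → Fin m → ℝ) (ψ : 𝓩 → Fin m → ℝ),
      ∫ p, (∑ i, η p.1 i * ψ p.2 i - g p.1 p.2) ^ 2 ∂(μX.prod νZ)
        ≤ (1 / m) * variance (fun q : 𝓧 × 𝓩 × 𝓗 =>
            pXH q.2.2 q.1 * pZH q.2.2 q.2.1 / (pX q.1 * pZ q.2.1)) (μX.prod (νZ.prod ρ)) := by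
  classical
  have hm0 : (m : ℝ) ≠ 0 := Nat.cast_ne_zero.2 (by omega)
  set F : 𝓧 × 𝓩 × 𝓗 → ℝ :=
    fun q => pXH q.2.2 q.1 * pZH q.2.2 q.2.1 / (pX q.1 * pZ q.2.1) with hF
  set μν : Measure (𝓧 × 𝓩) := μX.prod νZ with hμν
  set Pi : Measure (Fin m → 𝓗) := Measure.pi fun _ => ρ with hPi
  set G : (𝓧 × 𝓩) × 𝓗 → ℝ := fun q => F (q.1.1, q.1.2, q.2) with hGdef
  have hGmeas : Measurable G := by
    exact hmeas.comp (by fun_prop)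
  have hMP : MeasurePreserving (MeasurableEquiv.prodAssoc : (𝓧 × 𝓩) × 𝓗 ≃ᵐ 𝓧 × 𝓩 × 𝓗)
      (μν.prod ρ) (μX.prod (νZ.prod ρ)) := measurePreserving_prodAssoc μX νZ ρ
  have hasc : ∀ x : (𝓧 × 𝓩) × 𝓗, F (MeasurableEquiv.prodAssoc x) = G x := fun _ => rfl
  have hG2 : MemLp G 2 (μν.prod ρ) := by
    have h := hL2.comp_measurePreserving hMP
    have h3 : F ∘ (⇑(MeasurableEquiv.prodAssoc : (𝓧 × 𝓩) × 𝓗 ≃ᵐ 𝓧 × 𝓩 × 𝓗)) = G :=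
      funext fun x => hasc x
    rwa [h3] at h
  set μ0 : ℝ := ∫ q, F q ∂(μX.prod (νZ.prod ρ)) with hμ0
  -- variance transfer
  have hVar : variance F (μX.prod (νZ.prod ρ)) = ∫ q, (G q - μ0) ^ 2 ∂(μν.prod ρ) := by
    have h1 : variance F (μX.prod (νZ.prod ρ)) = ∫ q, (F q - μ0) ^ 2 ∂(μX.prod (νZ.prod ρ)) := by
      rw [variance_eq_integral hL2.aestronglyMeasurable.aemeasurable]
    have h2 : ∫ x, (F (MeasurableEquiv.prodAssoc x) - μ0) ^ 2 ∂(μν.prod ρ)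
        = ∫ q, (F q - μ0) ^ 2 ∂(μX.prod (νZ.prod ρ)) :=
      hMP.integral_comp' (fun q => (F q - μ0) ^ 2)
    rw [h1, ← h2]
    simp only [hasc]
  -- the averaged function
  set gfun : 𝓧 × 𝓩 → ℝ := fun p => ∫ h, G (p, h) ∂ρ with hgfun
  have hgeq : ∀ p : 𝓧 × 𝓩, g p.1 p.2 = gfun p := fun p => hg p.1 p.2
  have hgfunSM : StronglyMeasurable gfun :=
    hGmeas.stronglyMeasurable.integral_prod_right'
  -- the error function
  set Φ : (Fin m → 𝓗) → (𝓧 × 𝓩) → ℝ :=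
    fun v p => ((m : ℝ)⁻¹ * ∑ i, G (p, v i) - gfun p) ^ 2 with hΦdef
  have hΦmeas : Measurable fun z : (Fin m → 𝓗) × (𝓧 × 𝓩) => Φ z.1 z.2 := by
    apply Measurable.pow_const
    apply Measurable.sub
    · apply Measurable.const_mul
      exact Finset.measurable_sum _ fun i _ =>
        hGmeas.comp (measurable_snd.prodMk ((measurable_pi_apply i).comp measurable_fst))
    · exact hgfunSM.measurable.comp measurable_snd
  have hΦnn : ∀ v p, 0 ≤ Φ v p := fun v p => sq_nonneg _
  -- slices
  have hsq : Integrable (fun q => G q ^ 2) (μν.prod ρ) := hG2.integrable_sq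
  have hslice : ∀ᵐ p ∂μν, MemLp (fun h => G (p, h)) 2 ρ := by
    filter_upwards [hsq.prod_right_ae] with p hp
    exact (memLp_two_iff_integrable_sq
      ((hGmeas.comp measurable_prodMk_left).stronglyMeasurable.aestronglyMeasurable)).2 hp
  -- the dominating function
  set ζ : 𝓧 × 𝓩 → ℝ := fun p => ∫ h, (G (p, h) - μ0) ^ 2 ∂ρ with hζdef
  have hζnn : ∀ p, 0 ≤ ζ p := fun p => integral_nonneg fun h => sq_nonneg _
  have hGm2 : Integrable (fun q => (G q - μ0) ^ 2) (μν.prod ρ) := by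
    have := (hG2.sub (memLp_const μ0)).integrable_sq
    simpa [Pi.sub_apply] using this
  have hζint : Integrable ζ μν := hGm2.integral_prod_left
  have hζeq : ∫ p, ζ p ∂μν = ∫ q, (G q - μ0) ^ 2 ∂(μν.prod ρ) :=
    (integral_prod _ hGm2).symm
  -- pointwise (a.e.) bound on the inner integral
  have hae : ∀ᵐ p ∂μν,
      (∫⁻ v, ENNReal.ofReal (Φ v p) ∂Pi) ≤ ENNReal.ofReal ((m : ℝ)⁻¹ * ζ p) := by
    filter_upwards [hslice] with p hp
    set d : 𝓗 → ℝ := fun h => G (p, h) - gfun p with hd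
    have hdmem : MemLp d 2 ρ := by
      have := hp.sub (memLp_const (gfun p))
      exact this
    have hd0 : ∫ h, d h ∂ρ = 0 := by
      rw [hd]
      rw [integral_sub (hp.integrable one_le_two) (integrable_const _)]
      simp [hgfun]
    obtain ⟨hint, heq⟩ := pi_sum_sq ρ m d hdmem hd0
    have hΦrw : ∀ v : Fin m → 𝓗, Φ v p = ((m : ℝ)⁻¹) ^ 2 * (∑ i, d (v i)) ^ 2 := by
      intro v
      have hsum : ∑ i, d (v i) = (∑ i, G (p, v i)) - m * gfun p := by
        rw [hd, Finset.sum_sub_distrib, Finset.sum_const, Finset.card_univ,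
          Fintype.card_fin, nsmul_eq_mul]
      rw [hΦdef, hsum, ← mul_pow]
      field_simp
    have hΦint : Integrable (fun v => Φ v p) Pi := by
      simp_rw [hΦrw]
      exact hint.const_mul _
    have hΦval : ∫ v, Φ v p ∂Pi = (m : ℝ)⁻¹ * ∫ h, d h ^ 2 ∂ρ := by
      simp_rw [hΦrw]
      rw [integral_const_mul, heq]
      field_simp
    have hd2le : ∫ h, d h ^ 2 ∂ρ ≤ ζ p := by
      have hexp : ∀ h : 𝓗, (G (p, h) - μ0) ^ 2
          = d h ^ 2 + (2 * (gfun p - μ0)) * d h + (gfun p - μ0) ^ 2 := by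
        intro h; rw [hd]; ring
      have i1 : Integrable (fun h => d h ^ 2) ρ := hdmem.integrable_sq
      have i2 : Integrable (fun h => (2 * (gfun p - μ0)) * d h) ρ :=
        (hdmem.integrable one_le_two).const_mul _
      have i3 : Integrable (fun _ : 𝓗 => (gfun p - μ0) ^ 2) ρ := integrable_const _
      have : ζ p = (∫ h, d h ^ 2 ∂ρ) + (gfun p - μ0) ^ 2 := by
        rw [hζdef]
        simp only []
        rw [show (fun h => (G (p, h) - μ0) ^ 2)
            = fun h => d h ^ 2 + (2 * (gfun p - μ0)) * d h + (gfun p - μ0) ^ 2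
          from funext hexp]
        have i12 : Integrable (fun h => d h ^ 2 + 2 * (gfun p - μ0) * d h) ρ := i1.add i2
        rw [integral_add i12 i3, integral_add i1 i2, integral_const_mul, hd0]
        simp
      rw [this]
      exact le_add_of_nonneg_right (sq_nonneg _)
    rw [← ofReal_integral_eq_lintegral_ofReal hΦint (ae_of_all _ fun v => hΦnn v p)]
    apply ENNReal.ofReal_le_ofReal
    rw [hΦval]
    have : (0:ℝ) ≤ (m : ℝ)⁻¹ := by positivity
    exact mul_le_mul_of_nonneg_left hd2le this
  -- put everything together with Tonelli
  have hswap : ∫⁻ v, (∫⁻ p, ENNReal.ofReal (Φ v p) ∂μν) ∂Pi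
      = ∫⁻ p, (∫⁻ v, ENNReal.ofReal (Φ v p) ∂Pi) ∂μν := by
    exact lintegral_lintegral_swap
      ((ENNReal.measurable_ofReal.comp hΦmeas).aemeasurable)
  have htot : ∫⁻ v, (∫⁻ p, ENNReal.ofReal (Φ v p) ∂μν) ∂Pi
      ≤ ENNReal.ofReal ((m : ℝ)⁻¹ * ∫ q, (G q - μ0) ^ 2 ∂(μν.prod ρ)) := by
    rw [hswap]
    calc ∫⁻ p, (∫⁻ v, ENNReal.ofReal (Φ v p) ∂Pi) ∂μν
        ≤ ∫⁻ p, ENNReal.ofReal ((m : ℝ)⁻¹ * ζ p) ∂μν := lintegral_mono_ae hae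
      _ = ENNReal.ofReal (∫ p, (m : ℝ)⁻¹ * ζ p ∂μν) := by
          rw [ofReal_integral_eq_lintegral_ofReal (hζint.const_mul _)
            (ae_of_all _ fun p => by positivity)]
      _ = ENNReal.ofReal ((m : ℝ)⁻¹ * ∫ q, (G q - μ0) ^ 2 ∂(μν.prod ρ)) := by
          rw [integral_const_mul, hζeq]
  -- pick a good sample
  set c : ℝ := (m : ℝ)⁻¹ * ∫ q, (G q - μ0) ^ 2 ∂(μν.prod ρ) with hc
  have hcnn : 0 ≤ c := by
    apply mul_nonneg (by positivity)
    exact integral_nonneg fun q => sq_nonneg _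
  have hmeas2 : Measurable fun v => ∫⁻ p, ENNReal.ofReal (Φ v p) ∂μν :=
    (ENNReal.measurable_ofReal.comp hΦmeas).lintegral_prod_right'
  obtain ⟨v, hv⟩ := exists_le_lintegral (μ := Pi) hmeas2.aemeasurable
  have hvle : (∫⁻ p, ENNReal.ofReal (Φ v p) ∂μν) ≤ ENNReal.ofReal c := hv.trans htot
  -- integrability and value bound of the error at v
  have hΦvSM : AEStronglyMeasurable (fun p => Φ v p) μν :=
    (hΦmeas.comp (measurable_const.prodMk measurable_id)).stronglyMeasurable.aestronglyMeasurable
  have hval : ∫ p, Φ v p ∂μν ≤ c := by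
    rw [integral_eq_lintegral_of_nonneg_ae (ae_of_all _ fun p => hΦnn v p) hΦvSM]
    exact ENNReal.toReal_le_of_le_ofReal hcnn hvle
  -- final bound for c
  have hcfin : c ≤ (1 / m) * variance F (μX.prod (νZ.prod ρ)) := by
    rw [hVar, hc, one_div]
  -- construct η and ψ
  refine ⟨fun x i => pXH (v i) x / (pX x * m), fun z i => pZH (v i) z / pZ z, ?_⟩
  have hrw : ∀ p : 𝓧 × 𝓩,
      (∑ i, pXH (v i) p.1 / (pX p.1 * m) * (pZH (v i) p.2 / pZ p.2) - g p.1 p.2) ^ 2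
        = Φ v p := by
    intro p
    rw [hgeq p, hΦdef]
    congr 2
    rw [Finset.mul_sum]
    refine Finset.sum_congr rfl fun i _ => ?_
    show pXH (v i) p.1 / (pX p.1 * m) * (pZH (v i) p.2 / pZ p.2)
      = (m : ℝ)⁻¹ * (pXH (v i) p.1 * pZH (v i) p.2 / (pX p.1 * pZ p.2))
    rw [div_mul_div_comm, inv_mul_eq_div, div_div, mul_right_comm]
  calc ∫ p, (∑ i, pXH (v i) p.1 / (pX p.1 * m) * (pZH (v i) p.2 / pZ p.2) - g p.1 p.2) ^ 2 ∂μν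
      = ∫ p, Φ v p ∂μν := by simp_rw [hrw]
    _ ≤ c := hval
    _ ≤ (1 / m) * variance F (μX.prod (νZ.prod ρ)) := hcfin
end

section
/- In the discrete hidden-variable setting where g*(x,z) = η*(x)ᵀψ*(z) with η*(x) = (P(H=h|X=x))_h and ψ*(z) = (p_{Z|H}(z|h)/p_Z(z))_h, the weight vector w = E[ψ*(Z) E[Y|Z]] satisfies wᵀη*(x) = μ(x) for all x, where μ(x) = E[E[Y|Z] | X=x]. -/
open MeasureTheory

/-- Discrete hidden variable linear reproduction: if `g*(x,z) = η*(x)ᵀψ*(z)` (finite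
index set `S`), then `w = E[ψ*(Z) E[Y|Z]]` satisfies `wᵀη*(x) = μ(x)` for all `x`,
where `μ(x) = ∫ E[Y|Z=z] g*(x,z) p_Z(dz)`. -/
theorem stmt8 {𝓧 𝓩 S : Type*} [Fintype S] [MeasurableSpace 𝓩]
    (ν : Measure 𝓩) [IsProbabilityMeasure ν]
    (η : 𝓧 → S → ℝ) (ψ : 𝓩 → S → ℝ) (g : 𝓧 → 𝓩 → ℝ)
    (r : 𝓩 → ℝ)  -- `r z = E[Y | Z = z]`
    (hfact : ∀ x z, g x z = ∑ h, η x h * ψ z h)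
    (hint : ∀ h : S, Integrable (fun z => ψ z h * r z) ν)
    (w : S → ℝ) (hw : ∀ h, w h = ∫ z, ψ z h * r z ∂ν)
    (μfun : 𝓧 → ℝ) (hμ : ∀ x, μfun x = ∫ z, r z * g x z ∂ν) :
    ∀ x, ∑ h, w h * η x h = μfun x := by
  intro x
  rw [hμ]
  have : (fun z => r z * g x z) = fun z => ∑ h, η x h * (ψ z h * r z) := by
    funext z
    rw [hfact, Finset.mul_sum]
    exact Finset.sum_congr rfl fun h _ => by ring
  rw [this, integral_finset_sum _ (fun h _ => (hint h).const_mul (η x h))]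
  refine Finset.sum_congr rfl fun h _ => ?_
  rw [hw, integral_const_mul]
  ring
end

section
/- In the Gaussian model with H ∼ N(0,σ²), X|H ∼ N(H,1), Z|H ∼ N(H,1), X ⟂ Z | H, and σ² < 1/2, one has E[(p_{X|H}(X|H̄) p_{Z|H}(Z̃|H̄)/(p_X(X) p_Z(Z̃)))²] = (1+σ²)²/√(1-4σ⁴), where (X, Z̃, H̄) ∼ p_X ⊗ p_Z ⊗ p_H are mutually independent. -/
open MeasureTheory Real

lemma gauss_lin (a : ℝ) (ha : 0 < a) (b : ℝ) :
    ∫ x : ℝ, Real.exp (-(a * x ^ 2) + b * x)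
      = Real.sqrt (π / a) * Real.exp (b ^ 2 / (4 * a)) := by
  have h : ∀ x : ℝ, -(a * x ^ 2) + b * x
      = -a * (x - b / (2 * a)) ^ 2 + b ^ 2 / (4 * a) := by
    intro x; field_simp; ring
  simp_rw [h, Real.exp_add]
  rw [MeasureTheory.integral_mul_const,
    integral_sub_right_eq_self (fun x => Real.exp (-a * x ^ 2)) (b / (2 * a)),
    integral_gaussian]


/-- Gaussian model: with `s = σ² ∈ (0, 1/2)`, `H ∼ N(0,s)`, `X|H ∼ N(H,1)`, `Z|H ∼ N(H,1)`
(so marginals are `N(0, 1+s)`), and `(X, Z̃, H̄) ∼ p_X ⊗ p_Z ⊗ p_H` independent,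
`E[(p_{X|H}(X|H̄) p_{Z|H}(Z̃|H̄)/(p_X(X) p_Z(Z̃)))²] = (1+s)²/√(1-4s²)`. -/
theorem stmt15 (s : ℝ) (hs : 0 < s) (hs2 : s < 1 / 2)
    (pH : ℝ → ℝ)
    (hpH : ∀ h, pH h = (Real.sqrt (2 * π * s))⁻¹ * Real.exp (-(h ^ 2) / (2 * s)))
    (pX pZ : ℝ → ℝ)
    (hpX : ∀ x, pX x = (Real.sqrt (2 * π * (1 + s)))⁻¹ * Real.exp (-(x ^ 2) / (2 * (1 + s))))
    (hpZ : ∀ z, pZ z = (Real.sqrt (2 * π * (1 + s)))⁻¹ * Real.exp (-(z ^ 2) / (2 * (1 + s))))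
    (pcond : ℝ → ℝ → ℝ)  -- `pcond x h` is the `N(h, 1)` density at `x`
    (hpcond : ∀ x h, pcond x h = (Real.sqrt (2 * π))⁻¹ * Real.exp (-((x - h) ^ 2) / 2)) :
    ∫ x, ∫ z, ∫ h, (pcond x h * pcond z h / (pX x * pZ z)) ^ 2 * pX x * pZ z * pH h
      = (1 + s) ^ 2 / Real.sqrt (1 - 4 * s ^ 2) := by
  have hπ := Real.pi_pos
  have h1s : (0:ℝ) < 1 + s := by linarith
  have h4s : (0:ℝ) < 4 * s + 1 := by linarith
  have hq : (0:ℝ) < 4 * s ^ 2 + 2 * s + 1 := by positivity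
  have h14 : (0:ℝ) < 1 - 4 * s ^ 2 := by nlinarith
  set A : ℝ := 2 + 1 / (2 * s) with hA_def
  have hA : 0 < A := by positivity
  set A₂ : ℝ := (4 * s ^ 2 + 2 * s + 1) / (2 * (1 + s) * (4 * s + 1)) with hA2_def
  have hA2 : 0 < A₂ := by positivity
  set A₃ : ℝ := (1 - 4 * s ^ 2) / (2 * (1 + s) * (4 * s ^ 2 + 2 * s + 1)) with hA3_def
  have hA3 : 0 < A₃ := by positivity
  set K : ℝ := (1 + s) / (2 * π) * (Real.sqrt (2 * π * s))⁻¹ with hK_def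
  have hS1 : Real.sqrt (2 * π) ^ 2 = 2 * π := Real.sq_sqrt (by positivity)
  have hS2 : Real.sqrt (2 * π * (1 + s)) ^ 2 = 2 * π * (1 + s) := Real.sq_sqrt (by positivity)
  have hS1n : Real.sqrt (2 * π) ≠ 0 := by positivity
  have hS2n : Real.sqrt (2 * π * (1 + s)) ≠ 0 := by positivity
  have hS3n : Real.sqrt (2 * π * s) ≠ 0 := by positivity
  -- pointwise rewrite of the integrand
  have hpt : ∀ x z h : ℝ, (pcond x h * pcond z h / (pX x * pZ z)) ^ 2 * pX x * pZ z * pH h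
      = K * Real.exp (-(x ^ 2 + z ^ 2) + (x ^ 2 + z ^ 2) / (2 * (1 + s)))
          * Real.exp (-(A * h ^ 2) + (2 * (x + z)) * h) := by
    intro x z h
    rw [hpcond, hpcond, hpX, hpZ, hpH]
    have hexp : Real.exp (-(x ^ 2 + z ^ 2) + (x ^ 2 + z ^ 2) / (2 * (1 + s)))
        * Real.exp (-(A * h ^ 2) + (2 * (x + z)) * h)
        = Real.exp (-((x - h) ^ 2) / 2) ^ 2 * Real.exp (-((z - h) ^ 2) / 2) ^ 2
          * (Real.exp (-(x ^ 2) / (2 * (1 + s))))⁻¹ * (Real.exp (-(z ^ 2) / (2 * (1 + s))))⁻¹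
          * Real.exp (-(h ^ 2) / (2 * s)) := by
      simp only [pow_two, ← Real.exp_neg, ← Real.exp_add]
      congr 1
      rw [hA_def]
      field_simp
      ring
    have hK2 : K = ((Real.sqrt (2 * π))⁻¹) ^ 2 * ((Real.sqrt (2 * π))⁻¹) ^ 2
        * (Real.sqrt (2 * π * (1 + s))) ^ 2 * (Real.sqrt (2 * π * s))⁻¹ := by
      rw [hK_def, inv_pow, hS1, hS2]
      field_simp
    conv_rhs => rw [mul_assoc, hexp, hK2]
    field_simp
  simp_rw [hpt, MeasureTheory.integral_const_mul, gauss_lin A hA]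
  -- now integrand in z
  have hz : ∀ x z : ℝ,
      K * Real.exp (-(x ^ 2 + z ^ 2) + (x ^ 2 + z ^ 2) / (2 * (1 + s)))
        * (Real.sqrt (π / A) * Real.exp ((2 * (x + z)) ^ 2 / (4 * A)))
      = (K * Real.sqrt (π / A))
          * Real.exp (-(x ^ 2) + x ^ 2 / (2 * (1 + s)) + 2 * s * x ^ 2 / (4 * s + 1))
          * Real.exp (-(A₂ * z ^ 2) + (4 * s * x / (4 * s + 1)) * z) := by
    intro x z
    have he : Real.exp (-(x ^ 2 + z ^ 2) + (x ^ 2 + z ^ 2) / (2 * (1 + s)))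
        * Real.exp ((2 * (x + z)) ^ 2 / (4 * A))
        = Real.exp (-(x ^ 2) + x ^ 2 / (2 * (1 + s)) + 2 * s * x ^ 2 / (4 * s + 1))
          * Real.exp (-(A₂ * z ^ 2) + (4 * s * x / (4 * s + 1)) * z) := by
      rw [← Real.exp_add, ← Real.exp_add]
      congr 1
      rw [hA_def, hA2_def]
      field_simp
      ring
    calc K * Real.exp (-(x ^ 2 + z ^ 2) + (x ^ 2 + z ^ 2) / (2 * (1 + s)))
        * (Real.sqrt (π / A) * Real.exp ((2 * (x + z)) ^ 2 / (4 * A)))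
        = K * Real.sqrt (π / A)
          * (Real.exp (-(x ^ 2 + z ^ 2) + (x ^ 2 + z ^ 2) / (2 * (1 + s)))
            * Real.exp ((2 * (x + z)) ^ 2 / (4 * A))) := by ring
      _ = _ := by rw [he]; ring
  simp_rw [hz, MeasureTheory.integral_const_mul, gauss_lin A₂ hA2]
  -- now integrand in x
  have hx : ∀ x : ℝ,
      K * Real.sqrt (π / A)
        * Real.exp (-(x ^ 2) + x ^ 2 / (2 * (1 + s)) + 2 * s * x ^ 2 / (4 * s + 1))
        * (Real.sqrt (π / A₂) * Real.exp ((4 * s * x / (4 * s + 1)) ^ 2 / (4 * A₂)))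
      = (K * Real.sqrt (π / A) * Real.sqrt (π / A₂))
          * Real.exp (-(A₃ * x ^ 2) + 0 * x) := by
    intro x
    have he : Real.exp (-(x ^ 2) + x ^ 2 / (2 * (1 + s)) + 2 * s * x ^ 2 / (4 * s + 1))
        * Real.exp ((4 * s * x / (4 * s + 1)) ^ 2 / (4 * A₂))
        = Real.exp (-(A₃ * x ^ 2) + 0 * x) := by
      rw [← Real.exp_add]
      congr 1
      rw [hA2_def, hA3_def]
      field_simp
      ring
    calc K * Real.sqrt (π / A)
        * Real.exp (-(x ^ 2) + x ^ 2 / (2 * (1 + s)) + 2 * s * x ^ 2 / (4 * s + 1))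
        * (Real.sqrt (π / A₂) * Real.exp ((4 * s * x / (4 * s + 1)) ^ 2 / (4 * A₂)))
        = K * Real.sqrt (π / A) * Real.sqrt (π / A₂)
          * (Real.exp (-(x ^ 2) + x ^ 2 / (2 * (1 + s)) + 2 * s * x ^ 2 / (4 * s + 1))
            * Real.exp ((4 * s * x / (4 * s + 1)) ^ 2 / (4 * A₂))) := by ring
      _ = _ := by rw [he]
  simp_rw [hx, MeasureTheory.integral_const_mul, gauss_lin A₃ hA3]
  -- final algebra with square roots
  have hexp0 : Real.exp (0 ^ 2 / (4 * A₃)) = 1 := by norm_num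
  rw [hexp0, mul_one]
  have hL : 0 ≤ K * Real.sqrt (π / A) * Real.sqrt (π / A₂) * Real.sqrt (π / A₃) := by
    have hK0 : 0 < K := by rw [hK_def]; positivity
    positivity
  have hR : 0 ≤ (1 + s) ^ 2 / Real.sqrt (1 - 4 * s ^ 2) := by positivity
  have e1 : Real.sqrt (π / A) ^ 2 = π / A := Real.sq_sqrt (by positivity)
  have e2 : Real.sqrt (π / A₂) ^ 2 = π / A₂ := Real.sq_sqrt (by positivity)
  have e3 : Real.sqrt (π / A₃) ^ 2 = π / A₃ := Real.sq_sqrt (by positivity)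
  have e4 : Real.sqrt (1 - 4 * s ^ 2) ^ 2 = 1 - 4 * s ^ 2 := Real.sq_sqrt (by positivity)
  have e5 : Real.sqrt (2 * π * s) ^ 2 = 2 * π * s := Real.sq_sqrt (by positivity)
  rw [← sq_eq_sq₀ hL hR, mul_pow, mul_pow, mul_pow, e1, e2, e3, div_pow, e4, hK_def,
    hA_def, hA2_def, hA3_def, mul_pow, inv_pow, e5]
  field_simp
  ring
end

section
/- In the disjoint-support topic model with K topics and symmetric Dirichlet(α) topic weights, E[(p_{X|Θ}(X|Θ̄) p_{Z|Θ}(Z̃|Θ̄)/(p_X(X)p_Z(Z̃)))²] = K³·(E[Θ̄₁⁴] + (K-1)·E[Θ̄₁²Θ̄₂²]), where (X, Z̃, Θ̄) ∼ p_X ⊗ p_Z ⊗ Dirichlet(α·1_K) are mutually independent. -/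
open MeasureTheory

lemma exch_int {K : ℕ} (ρ : Measure (Fin K → ℝ)) [IsProbabilityMeasure ρ]
    (hexch : ∀ e : Equiv.Perm (Fin K), ρ.map (fun θ => θ ∘ e) = ρ)
    (f : (Fin K → ℝ) → ℝ) (hf : Measurable f) (e : Equiv.Perm (Fin K)) :
    ∫ θ, f θ ∂ρ = ∫ θ, f (θ ∘ e) ∂ρ := by
  conv_lhs => rw [← hexch e]
  exact integral_map
    ((show Measurable (fun θ : Fin K → ℝ => θ ∘ e) from
      measurable_pi_lambda _ fun i => measurable_pi_apply (e i)).aemeasurable)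
    hf.aestronglyMeasurable

lemma perm_two {K : ℕ} (i j i' j' : Fin K) (hij : i ≠ j) (hij' : i' ≠ j') :
    ∃ e : Equiv.Perm (Fin K), e i = i' ∧ e j = j' := by
  have hj'' : i' ≠ (Equiv.swap i i') j := by
    intro h
    exact hij ((Equiv.swap i i').injective (by rw [Equiv.swap_apply_left]; exact h))
  refine ⟨(Equiv.swap i i').trans (Equiv.swap ((Equiv.swap i i') j) j'), ?_, ?_⟩
  · simp only [Equiv.trans_apply, Equiv.swap_apply_left]
    exact Equiv.swap_apply_of_ne_of_ne hj'' hij'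
  · simp only [Equiv.trans_apply, Equiv.swap_apply_left]

/-- Topic model fourth-moment identity: in the disjoint-support topic model with `K`
topics and exchangeable (e.g. symmetric Dirichlet) topic weights `Θ̄ ∼ ρ` supported on
the simplex, with `(X, Z̃, Θ̄) ∼ p_X ⊗ p_Z ⊗ ρ` independent,
`E[(p_{X|Θ}(X|Θ̄) p_{Z|Θ}(Z̃|Θ̄)/(p_X(X)p_Z(Z̃)))²] = K³ (E[Θ̄₁⁴] + (K-1) E[Θ̄₁²Θ̄₂²])`.
Here the vocabulary is finite, `topic v` is the unique topic whose distribution gives `v`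
positive mass `P v`, `p_X(v) = P v / K`, and `p_{X|Θ}(v|θ) = θ_{topic v} · P v`. -/
theorem stmt16 {V : Type*} [Fintype V] (K : ℕ) (hK : 2 ≤ K)
    (topic : V → Fin K) (P : V → ℝ) (hP : ∀ v, 0 < P v)
    (hPsum : ∀ j : Fin K, ∑ v ∈ Finset.univ.filter fun v => topic v = j, P v = 1)
    (ρ : Measure (Fin K → ℝ)) [IsProbabilityMeasure ρ]
    (hsimplex : ∀ᵐ θ ∂ρ, (∀ i, 0 ≤ θ i) ∧ ∑ i, θ i = 1)
    (hexch : ∀ e : Equiv.Perm (Fin K), ρ.map (fun θ => θ ∘ e) = ρ)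
    (hint22 : Integrable (fun θ => (θ ⟨0, by omega⟩) ^ 2 * (θ ⟨1, by omega⟩) ^ 2) ρ)
    (hint4 : Integrable (fun θ => (θ ⟨0, by omega⟩) ^ 4) ρ)
    (pX : V → ℝ) (hpX : ∀ v, pX v = P v / K) :
    ∑ v, ∑ v', pX v * pX v' *
        ∫ θ, ((θ (topic v) * P v) * (θ (topic v') * P v') / (pX v * pX v')) ^ 2 ∂ρ
      = (K : ℝ) ^ 3 * ((∫ θ, (θ ⟨0, by omega⟩) ^ 4 ∂ρ)
          + ((K : ℝ) - 1) * ∫ θ, (θ ⟨0, by omega⟩) ^ 2 * (θ ⟨1, by omega⟩) ^ 2 ∂ρ) := by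
  have hKne : (K : ℝ) ≠ 0 := by positivity
  set i0 : Fin K := ⟨0, by omega⟩ with hi0
  set i1 : Fin K := ⟨1, by omega⟩ with hi1
  have hi01 : i0 ≠ i1 := by simp [hi0, hi1, Fin.ext_iff]
  set A : ℝ := ∫ θ, (θ i0) ^ 4 ∂ρ with hA
  set B : ℝ := ∫ θ, (θ i0) ^ 2 * (θ i1) ^ 2 ∂ρ with hB
  set M : Fin K → Fin K → ℝ := fun i j => ∫ θ, (θ i) ^ 2 * (θ j) ^ 2 ∂ρ with hM
  -- moment identities from exchangeability
  have hMdiag : ∀ i : Fin K, M i i = A := by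
    intro i
    obtain ⟨e, he0, -⟩ := perm_two i0 i1 i0 i1 hi01 hi01
    have heq : ∀ x : Fin K → ℝ, (x i0) ^ 4 = (x i0) ^ 2 * (x i0) ^ 2 := fun x => by ring
    have key := exch_int ρ hexch (fun θ => (θ i0) ^ 4) (by fun_prop) (Equiv.swap i0 i)
    simp only [Function.comp, Equiv.swap_apply_left] at key
    rw [hM, hA, key]
    exact integral_congr_ae (Filter.Eventually.of_forall fun θ => by ring)
  have hMoff : ∀ i j : Fin K, i ≠ j → M i j = B := by
    intro i j hij
    obtain ⟨e, he0, he1⟩ := perm_two i0 i1 i j hi01 hij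
    have key := exch_int ρ hexch (fun θ => (θ i0) ^ 2 * (θ i1) ^ 2) (by fun_prop) e
    simp only [Function.comp, he0, he1] at key
    rw [hM, hB, key]
  -- per-term simplification
  have hterm : ∀ v v' : V, pX v * pX v' *
      ∫ θ, ((θ (topic v) * P v) * (θ (topic v') * P v') / (pX v * pX v')) ^ 2 ∂ρ
      = (K : ℝ) ^ 2 * (P v * (P v' * M (topic v) (topic v'))) := by
    intro v v'
    have hv := (hP v).ne'
    have hv' := (hP v').ne'
    have h1 : (fun θ : Fin K → ℝ =>
        ((θ (topic v) * P v) * (θ (topic v') * P v') / (pX v * pX v')) ^ 2)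
        = fun θ => (K : ℝ) ^ 4 * ((θ (topic v)) ^ 2 * (θ (topic v')) ^ 2) := by
      ext θ
      rw [hpX, hpX]
      field_simp
    rw [h1, integral_const_mul, hpX, hpX]
    rw [hM]
    field_simp
  -- fiberwise summation
  have fib : ∀ f : Fin K → ℝ, ∑ v, P v * f (topic v) = ∑ i, f i := by
    intro f
    rw [← Finset.sum_fiberwise Finset.univ topic (fun v => P v * f (topic v))]
    refine Finset.sum_congr rfl fun i _ => ?_
    calc ∑ v ∈ Finset.univ.filter fun v => topic v = i, P v * f (topic v)
        = ∑ v ∈ Finset.univ.filter fun v => topic v = i, P v * f i := by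
          refine Finset.sum_congr rfl fun v hv => ?_
          simp only [Finset.mem_filter] at hv
          rw [hv.2]
      _ = (∑ v ∈ Finset.univ.filter fun v => topic v = i, P v) * f i := by
          rw [Finset.sum_mul]
      _ = f i := by rw [hPsum i, one_mul]
  have hrow : ∀ i : Fin K, ∑ j, M i j = A + ((K : ℝ) - 1) * B := by
    intro i
    have : ∑ j, M i j = ∑ j ∈ Finset.univ \ {i}, M i j + M i i := by
      rw [Finset.sum_eq_sum_sdiff_singleton_add (Finset.mem_univ i)]
    rw [this, hMdiag i]
    have hconst : ∑ j ∈ Finset.univ \ {i}, M i j = ∑ j ∈ Finset.univ \ {i}, B := by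
      refine Finset.sum_congr rfl fun j hj => ?_
      simp only [Finset.mem_sdiff, Finset.mem_singleton] at hj
      exact hMoff i j (Ne.symm hj.2)
    rw [hconst, Finset.sum_const, Finset.card_sdiff_of_subset (by simp), Finset.card_singleton,
      Finset.card_univ, Fintype.card_fin, nsmul_eq_mul, Nat.cast_sub (by omega)]
    push_cast
    ring
  calc ∑ v, ∑ v', pX v * pX v' *
        ∫ θ, ((θ (topic v) * P v) * (θ (topic v') * P v') / (pX v * pX v')) ^ 2 ∂ρ
      = ∑ v, ∑ v', (K : ℝ) ^ 2 * (P v * (P v' * M (topic v) (topic v'))) := by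
        exact Finset.sum_congr rfl fun v _ => Finset.sum_congr rfl fun v' _ => hterm v v'
    _ = (K : ℝ) ^ 2 * ∑ v, P v * ∑ v', P v' * M (topic v) (topic v') := by
        rw [Finset.mul_sum]
        exact Finset.sum_congr rfl fun v _ => by rw [Finset.mul_sum, Finset.mul_sum]
    _ = (K : ℝ) ^ 2 * ∑ v, P v * ∑ j, M (topic v) j := by
        congr 1
        exact Finset.sum_congr rfl fun v _ => by rw [fib (M (topic v))]
    _ = (K : ℝ) ^ 2 * ∑ i, ∑ j, M i j := by rw [fib (fun i => ∑ j, M i j)]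
    _ = (K : ℝ) ^ 2 * ∑ i : Fin K, (A + ((K : ℝ) - 1) * B) := by
        congr 1
        exact Finset.sum_congr rfl fun i _ => hrow i
    _ = (K : ℝ) ^ 3 * (A + ((K : ℝ) - 1) * B) := by
        rw [Finset.sum_const, Finset.card_univ, Fintype.card_fin, nsmul_eq_mul]
        ring
end

section
/- Transfer landmark embedding: let p and q be two joint distributions of (X,Z,Y) with identical conditionals q_{Z|X} = p_{Z|X}, let g*(x,z) = p_{X,Z}(x,z)/(p_X(x)p_Z(z)), and let Z₁ ∼ q_Z. Then for every x, E_{Z₁∼q_Z}[(p_Z(Z₁)/q_Z(Z₁))·E_q[Y|Z=Z₁]·g*(x,Z₁)] = μ_q(x), where μ_q(x) = E_q[E_q[Y|Z] | X=x]. -/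
open MeasureTheory

/-- Transfer landmark unbiasedness: if `p` and `q` share the conditional density
`p_{Z|X} = q_{Z|X} = pcond`, `g*(x,z) = p_{Z|X}(z|x)/p_Z(z)`, and `Z₁ ∼ q_Z`, then for
every `x`, `E_{Z₁∼q_Z}[(p_Z(Z₁)/q_Z(Z₁)) E_q[Y|Z=Z₁] g*(x,Z₁)] = μ_q(x)` where
`μ_q(x) = E_q[E_q[Y|Z] | X=x] = ∫ E_q[Y|Z=z] q_{Z|X}(z|x) dz`. -/
theorem stmt18 {𝓩 𝓧 : Type*} [MeasurableSpace 𝓩] (lamZ : Measure 𝓩)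
    (pZ qZ : 𝓩 → ℝ) (hpZ : ∀ z, 0 < pZ z) (hqZ : ∀ z, 0 < qZ z)
    (hmpZ : Measurable pZ) (hmqZ : Measurable qZ)
    (pcond : 𝓧 → 𝓩 → ℝ)  -- the shared conditional density `p_{Z|X} = q_{Z|X}`
    (r : 𝓩 → ℝ) (hmr : Measurable r)  -- `r z = E_q[Y | Z = z]`
    (hmpc : ∀ x, Measurable (pcond x))
    (g : 𝓧 → 𝓩 → ℝ) (hg : ∀ x z, g x z = pcond x z / pZ z)
    (μq : 𝓧 → ℝ) (hμq : ∀ x, μq x = ∫ z, r z * pcond x z ∂lamZ)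
    (x : 𝓧) :
    ∫ z, (pZ z / qZ z) * r z * g x z ∂(lamZ.withDensity fun z => ENNReal.ofReal (qZ z))
      = μq x := by
  have hd : (fun z => ENNReal.ofReal (qZ z))
      = fun z => (((qZ z).toNNReal : NNReal) : ENNReal) := by
    funext z; rfl
  rw [hμq, hd,
    integral_withDensity_eq_integral_smul (f := fun z => (qZ z).toNNReal)
      (hmqZ.real_toNNReal) (fun z => (pZ z / qZ z) * r z * g x z)]
  congr 1
  funext z
  have hq := (hqZ z).ne'
  have hp := (hpZ z).ne'
  rw [hg]
  simp only [NNReal.smul_def, Real.coe_toNNReal _ (hqZ z).le, smul_eq_mul]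
  field_simp
end
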